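/- Consider the 6-dimensional complex Lie algebra gl(2,ℂ) ⊕ t₂, where t₂ is spanned by central elements I₁, I₂, and gl(2,ℂ) has basis H₁, H₂, F₁₂, F₂₁ with [H_i, F_{12}] = (δ_{i1} − δ_{i2}) F_{12}, [H_i, F_{21}] = (δ_{i2} − δ_{i1}) F_{21}, [F_{12}, F_{21}] = H₁ − H₂, [H₁,H₂]=0. Define X_i := (H_i + i·I_i)/√2, x^i := (H_i − i·I_i)/√2. Then s₊ := span{X₁, X₂, F₁₂} and s₋ := span{x¹, x², F₂₁} are Lie subalgebras, they are solvable, and gl(2,ℂ) ⊕ t₂ = s₊ ⊕ s₋ as vector spaces. -/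

import Mathlib

open Matrix

attribute [local instance 100] LieRing.ofAssociativeRing

/-- `gl(2,ℂ) ⊕ t₂`, realized as the associative algebra
`Matrix (Fin 2) (Fin 2) ℂ × (Fin 2 → ℂ)` with the commutator Lie bracket; the second
(commutative) factor is central, spanned by `I₁, I₂`. -/
abbrev gl2t2 : Type := Matrix (Fin 2) (Fin 2) ℂ × (Fin 2 → ℂ)

/-- The Cartan generators `H_i = E_ii`. -/
noncomputable def Hgl (i : Fin 2) : gl2t2 := (single i i 1, 0)

/-- The central generators `I_i`. -/
def Igl (i : Fin 2) : gl2t2 := (0, Pi.single i 1)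

/-- The root generators `F_{ij} = E_{ij}` (`i ≠ j`). -/
noncomputable def Fgl (i j : Fin 2) : gl2t2 := (single i j 1, 0)

/-- `X_i := (H_i + i·I_i)/√2`. -/
noncomputable def Xgl (i : Fin 2) : gl2t2 :=
  ((Real.sqrt 2 : ℂ))⁻¹ • (Hgl i + Complex.I • Igl i)

/-- `x^i := (H_i − i·I_i)/√2`. -/
noncomputable def xgl (i : Fin 2) : gl2t2 :=
  ((Real.sqrt 2 : ℂ))⁻¹ • (Hgl i - Complex.I • Igl i)

noncomputable def cc : ℂ := ((Real.sqrt 2 : ℂ))⁻¹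

lemma brXX (i j : Fin 2) : ⁅(Xgl i : gl2t2), Xgl j⁆ = 0 := by
  fin_cases i <;> fin_cases j <;>
    simp [Ring.lie_def, Xgl, Hgl, Igl, Prod.ext_iff, mul_comm]

lemma brxx (i j : Fin 2) : ⁅(xgl i : gl2t2), xgl j⁆ = 0 := by
  fin_cases i <;> fin_cases j <;>
    simp [Ring.lie_def, xgl, Hgl, Igl, Prod.ext_iff, mul_comm]

lemma brXF0 : ⁅(Xgl 0 : gl2t2), Fgl 0 1⁆ = cc • Fgl 0 1 := by
  simp [Ring.lie_def, Xgl, Hgl, Igl, Fgl, cc, Prod.ext_iff]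

lemma brXF1 : ⁅(Xgl 1 : gl2t2), Fgl 0 1⁆ = (-cc) • Fgl 0 1 := by
  simp [Ring.lie_def, Xgl, Hgl, Igl, Fgl, cc, Prod.ext_iff]

lemma brxF0 : ⁅(xgl 0 : gl2t2), Fgl 1 0⁆ = (-cc) • Fgl 1 0 := by
  simp [Ring.lie_def, xgl, Hgl, Igl, Fgl, cc, Prod.ext_iff]

lemma brxF1 : ⁅(xgl 1 : gl2t2), Fgl 1 0⁆ = cc • Fgl 1 0 := by
  simp [Ring.lie_def, xgl, Hgl, Igl, Fgl, cc, Prod.ext_iff]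

lemma lie_span_span {s : Set gl2t2} {K : Submodule ℂ gl2t2}
    (h : ∀ a ∈ s, ∀ b ∈ s, ⁅a, b⁆ ∈ K) :
    ∀ x ∈ Submodule.span ℂ s, ∀ y ∈ Submodule.span ℂ s, ⁅x, y⁆ ∈ K := by
  intro x hx
  induction hx using Submodule.span_induction with
  | mem a ha =>
    intro y hy
    induction hy using Submodule.span_induction with
    | mem b hb => exact h a ha b hb
    | zero => simp
    | add b c _ _ hb hc => rw [lie_add]; exact K.add_mem hb hc
    | smul t b _ hb => rw [lie_smul]; exact K.smul_mem t hb
  | zero => intro y hy; simp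
  | add a b _ _ ha hb => intro y hy; rw [add_lie]; exact K.add_mem (ha y hy) (hb y hy)
  | smul t a _ ha => intro y hy; rw [smul_lie]; exact K.smul_mem t (ha y hy)

lemma br_sp : ∀ x ∈ Submodule.span ℂ ({Xgl 0, Xgl 1, Fgl 0 1} : Set gl2t2),
    ∀ y ∈ Submodule.span ℂ ({Xgl 0, Xgl 1, Fgl 0 1} : Set gl2t2),
    ⁅x, y⁆ ∈ (ℂ ∙ (Fgl 0 1 : gl2t2)) := by
  apply lie_span_span
  have hm : (Fgl 0 1 : gl2t2) ∈ ℂ ∙ (Fgl 0 1 : gl2t2) := Submodule.mem_span_singleton_self _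
  rintro a (rfl | rfl | rfl) b (rfl | rfl | rfl) <;>
    simp only [brXX, lie_self, brXF0, brXF1, ← lie_skew (Fgl 0 1), Submodule.zero_mem,
      neg_mem_iff]
  all_goals exact Submodule.smul_mem _ _ hm

lemma br_sm : ∀ x ∈ Submodule.span ℂ ({xgl 0, xgl 1, Fgl 1 0} : Set gl2t2),
    ∀ y ∈ Submodule.span ℂ ({xgl 0, xgl 1, Fgl 1 0} : Set gl2t2),
    ⁅x, y⁆ ∈ (ℂ ∙ (Fgl 1 0 : gl2t2)) := by
  apply lie_span_span
  have hm : (Fgl 1 0 : gl2t2) ∈ ℂ ∙ (Fgl 1 0 : gl2t2) := Submodule.mem_span_singleton_self _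
  rintro a (rfl | rfl | rfl) b (rfl | rfl | rfl) <;>
    simp only [brxx, lie_self, brxF0, brxF1, ← lie_skew (Fgl 1 0), Submodule.zero_mem,
      neg_mem_iff]
  all_goals exact Submodule.smul_mem _ _ hm

lemma solvable_aux (S : LieSubalgebra ℂ gl2t2) (f : gl2t2) (hf : f ∈ S)
    (hbr : ∀ x ∈ S.toSubmodule, ∀ y ∈ S.toSubmodule, ⁅x, y⁆ ∈ (ℂ ∙ f)) :
    LieAlgebra.IsSolvable S := by
  set fS : S := ⟨f, hf⟩ with hfS
  have key : ∀ x y : S, ∃ c : ℂ, ⁅x, y⁆ = c • fS := by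
    intro x y
    obtain ⟨c, hc⟩ := Submodule.mem_span_singleton.mp (hbr x x.2 y y.2)
    exact ⟨c, Subtype.ext (by rw [LieSubalgebra.coe_bracket, ← hc]; rfl)⟩
  refine LieAlgebra.IsSolvable.mk (R := ℂ) (k := 2) ?_
  have hJ : ∀ {x : S} {m : S}, m ∈ (ℂ ∙ fS) → ⁅x, m⁆ ∈ (ℂ ∙ fS) := by
    intro x m hm
    obtain ⟨c, hc⟩ := Submodule.mem_span_singleton.mp hm
    obtain ⟨d, hd⟩ := key x fS
    rw [← hc, lie_smul, hd, smul_smul]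
    exact Submodule.mem_span_singleton.mpr ⟨c * d, rfl⟩
  set J : LieIdeal ℂ S := { toSubmodule := (ℂ ∙ fS), lie_mem := hJ } with hJdef
  have hmemJ : ∀ z : S, z ∈ (ℂ ∙ fS) → z ∈ J := fun z h => h
  have hD1 : LieAlgebra.derivedSeries ℂ S 1 ≤ J := by
    rw [LieAlgebra.derivedSeries_def, LieAlgebra.derivedSeriesOfIdeal_succ,
      LieAlgebra.derivedSeriesOfIdeal_zero, LieSubmodule.lieIdeal_oper_eq_span,
      LieSubmodule.lieSpan_le]
    rintro m ⟨x, n, rfl⟩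
    obtain ⟨c, hc⟩ := key x n
    exact hmemJ _ (hc ▸ Submodule.mem_span_singleton.mpr ⟨c, rfl⟩)
  have hJJ : ⁅J, J⁆ = (⊥ : LieIdeal ℂ S) := by
    rw [LieSubmodule.lieIdeal_oper_eq_span]
    rw [le_bot_iff.symm, LieSubmodule.lieSpan_le]
    rintro m ⟨x, n, rfl⟩
    obtain ⟨c, hc⟩ := Submodule.mem_span_singleton.mp x.2
    obtain ⟨d, hd⟩ := Submodule.mem_span_singleton.mp n.2
    have : ⁅(x : S), (n : S)⁆ = 0 := by rw [← hc, ← hd, smul_lie, lie_smul, lie_self]; simp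
    simp [this]
  have : LieAlgebra.derivedSeries ℂ S 2 ≤ ⁅J, J⁆ := by
    rw [LieAlgebra.derivedSeries_def, LieAlgebra.derivedSeriesOfIdeal_succ]
    exact LieSubmodule.mono_lie (by rw [← LieAlgebra.derivedSeries_def]; exact hD1)
      (by rw [← LieAlgebra.derivedSeries_def]; exact hD1)
  rw [hJJ] at this
  exact le_bot_iff.mp this

lemma sqrt2_ne : ((Real.sqrt 2 : ℝ) : ℂ) ≠ 0 := by
  simp [Real.sqrt_eq_zero']

lemma X_add_x (i : Fin 2) : Xgl i + xgl i = ((2 : ℂ) * ((Real.sqrt 2 : ℂ))⁻¹) • Hgl i := by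
  simp only [Xgl, xgl]; module

lemma X_sub_x (i : Fin 2) :
    Xgl i - xgl i = ((2 : ℂ) * ((Real.sqrt 2 : ℂ))⁻¹ * Complex.I) • Igl i := by
  simp only [Xgl, xgl]; module

lemma decompose (z : gl2t2) :
    z = z.1 0 0 • Hgl 0 + z.1 1 1 • Hgl 1 + z.1 0 1 • Fgl 0 1 + z.1 1 0 • Fgl 1 0
      + z.2 0 • Igl 0 + z.2 1 • Igl 1 := by
  refine Prod.ext ?_ ?_
  · ext i j
    fin_cases i <;> fin_cases j <;> simp [Hgl, Fgl, Igl, Matrix.single_apply]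
  · ext i
    fin_cases i <;> simp [Hgl, Fgl, Igl]

lemma mem_span_triple {x a b c : gl2t2}
    (h : x ∈ Submodule.span ℂ ({a, b, c} : Set gl2t2)) :
    ∃ p q r : ℂ, x = p • a + q • b + r • c := by
  rw [Submodule.mem_span_insert] at h
  obtain ⟨p, y, hy, rfl⟩ := h
  rw [Submodule.mem_span_insert] at hy
  obtain ⟨q, z, hz, rfl⟩ := hy
  obtain ⟨r, rfl⟩ := Submodule.mem_span_singleton.mp hz
  exact ⟨p, q, r, by abel⟩

lemma inf_aux (x : gl2t2) (h1 : x ∈ Submodule.span ℂ ({Xgl 0, Xgl 1, Fgl 0 1} : Set gl2t2))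
    (h2 : x ∈ Submodule.span ℂ ({xgl 0, xgl 1, Fgl 1 0} : Set gl2t2)) : x = 0 := by
  obtain ⟨p, q, r, rfl⟩ := mem_span_triple h1
  obtain ⟨p', q', r', e⟩ := mem_span_triple h2
  have e00 := congrArg (fun z : gl2t2 => z.1 0 0) e
  have e11 := congrArg (fun z : gl2t2 => z.1 1 1) e
  have e01 := congrArg (fun z : gl2t2 => z.1 0 1) e
  have f0 := congrArg (fun z : gl2t2 => z.2 0) e
  have f1 := congrArg (fun z : gl2t2 => z.2 1) e
  simp [Xgl, xgl, Hgl, Igl, Fgl, Matrix.single_apply] at e00 e11 e01 f0 f1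
  have hc : ((Real.sqrt 2 : ℂ))⁻¹ * Complex.I ≠ 0 :=
    mul_ne_zero (inv_ne_zero sqrt2_ne) Complex.I_ne_zero
  rw [← e00] at f0
  rw [← e11] at f1
  have hp : p = 0 := by
    have h0 : p * (((Real.sqrt 2 : ℂ))⁻¹ * Complex.I) = 0 := by linear_combination f0 / 2
    exact (mul_eq_zero.mp h0).resolve_right hc
  have hq : q = 0 := by
    have h0 : q * (((Real.sqrt 2 : ℂ))⁻¹ * Complex.I) = 0 := by linear_combination f1 / 2
    exact (mul_eq_zero.mp h0).resolve_right hc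
  rw [hp, hq, e01]
  simp


/-- `sp = span{X₁, X₂, F₁₂}` and `sm = span{x¹, x², F₂₁}` are Lie
subalgebras of `gl(2,ℂ) ⊕ t₂`, they are solvable, and
`gl(2,ℂ) ⊕ t₂ = sp ⊕ sm` as vector spaces. -/
theorem gl2_double_decomposition
    (sp sm : Submodule ℂ gl2t2)
    (hsp : sp = Submodule.span ℂ {Xgl 0, Xgl 1, Fgl 0 1})
    (hsm : sm = Submodule.span ℂ {xgl 0, xgl 1, Fgl 1 0}) :
    (∀ x ∈ sp, ∀ y ∈ sp, ⁅x, y⁆ ∈ sp) ∧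
    (∀ x ∈ sm, ∀ y ∈ sm, ⁅x, y⁆ ∈ sm) ∧
    (∀ S : LieSubalgebra ℂ gl2t2, S.toSubmodule = sp → LieAlgebra.IsSolvable S) ∧
    (∀ S : LieSubalgebra ℂ gl2t2, S.toSubmodule = sm → LieAlgebra.IsSolvable S) ∧
    sp ⊓ sm = ⊥ ∧ sp ⊔ sm = ⊤ := by
  subst hsp hsm
  have hFsp : (Fgl 0 1 : gl2t2) ∈ Submodule.span ℂ ({Xgl 0, Xgl 1, Fgl 0 1} : Set gl2t2) :=
    Submodule.subset_span (by simp)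
  have hFsm : (Fgl 1 0 : gl2t2) ∈ Submodule.span ℂ ({xgl 0, xgl 1, Fgl 1 0} : Set gl2t2) :=
    Submodule.subset_span (by simp)
  have hFsp' : (ℂ ∙ (Fgl 0 1 : gl2t2)) ≤ Submodule.span ℂ ({Xgl 0, Xgl 1, Fgl 0 1} : Set gl2t2) :=
    (Submodule.span_singleton_le_iff_mem _ _).mpr hFsp
  have hFsm' : (ℂ ∙ (Fgl 1 0 : gl2t2)) ≤ Submodule.span ℂ ({xgl 0, xgl 1, Fgl 1 0} : Set gl2t2) :=
    (Submodule.span_singleton_le_iff_mem _ _).mpr hFsm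
  refine ⟨fun x hx y hy => hFsp' (br_sp x hx y hy),
    fun x hx y hy => hFsm' (br_sm x hx y hy), ?_, ?_, ?_, ?_⟩
  · intro S hS
    refine solvable_aux S (Fgl 0 1) (show Fgl 0 1 ∈ S.toSubmodule by rw [hS]; exact hFsp) ?_
    rw [hS]; exact br_sp
  · intro S hS
    refine solvable_aux S (Fgl 1 0) (show Fgl 1 0 ∈ S.toSubmodule by rw [hS]; exact hFsm) ?_
    rw [hS]; exact br_sm
  · rw [eq_bot_iff]
    rintro x ⟨h1, h2⟩
    rw [Submodule.mem_bot]
    exact inf_aux x h1 h2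
  · rw [eq_top_iff]
    have hXmem : ∀ i, Xgl i ∈ Submodule.span ℂ ({Xgl 0, Xgl 1, Fgl 0 1} : Set gl2t2) := by
      intro i; fin_cases i <;> exact Submodule.subset_span (by simp)
    have hxmem : ∀ i, xgl i ∈ Submodule.span ℂ ({xgl 0, xgl 1, Fgl 1 0} : Set gl2t2) := by
      intro i; fin_cases i <;> exact Submodule.subset_span (by simp)
    set K := Submodule.span ℂ ({Xgl 0, Xgl 1, Fgl 0 1} : Set gl2t2) ⊔
      Submodule.span ℂ ({xgl 0, xgl 1, Fgl 1 0} : Set gl2t2) with hK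
    have hX : ∀ i, Xgl i ∈ K := fun i => Submodule.mem_sup_left (hXmem i)
    have hx : ∀ i, xgl i ∈ K := fun i => Submodule.mem_sup_right (hxmem i)
    have hF01 : Fgl 0 1 ∈ K := Submodule.mem_sup_left hFsp
    have hF10 : Fgl 1 0 ∈ K := Submodule.mem_sup_right hFsm
    have h2c : ((2 : ℂ) * ((Real.sqrt 2 : ℂ))⁻¹) ≠ 0 :=
      mul_ne_zero two_ne_zero (inv_ne_zero sqrt2_ne)
    have hH : ∀ i, Hgl i ∈ K := by
      intro i
      have : Hgl i = ((2 : ℂ) * ((Real.sqrt 2 : ℂ))⁻¹)⁻¹ • (Xgl i + xgl i) := by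
        rw [X_add_x, inv_smul_smul₀ h2c]
      rw [this]
      exact Submodule.smul_mem _ _ (add_mem (hX i) (hx i))
    have hI : ∀ i, Igl i ∈ K := by
      intro i
      have h2ci : ((2 : ℂ) * ((Real.sqrt 2 : ℂ))⁻¹ * Complex.I) ≠ 0 :=
        mul_ne_zero h2c Complex.I_ne_zero
      have : Igl i = ((2 : ℂ) * ((Real.sqrt 2 : ℂ))⁻¹ * Complex.I)⁻¹ • (Xgl i - xgl i) := by
        rw [X_sub_x, inv_smul_smul₀ h2ci]
      rw [this]
      exact Submodule.smul_mem _ _ (sub_mem (hX i) (hx i))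
    rintro z -
    rw [decompose z]
    exact add_mem (add_mem (add_mem (add_mem (add_mem
      (Submodule.smul_mem _ _ (hH 0)) (Submodule.smul_mem _ _ (hH 1)))
      (Submodule.smul_mem _ _ hF01)) (Submodule.smul_mem _ _ hF10))
      (Submodule.smul_mem _ _ (hI 0))) (Submodule.smul_mem _ _ (hI 1))
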